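/- arXiv:2201.08474 — 4 statements merged into one kernel-verified Lean document; each statement's English description precedes it below -/
import Mathlib

section
/- With A, B as above and c ∈ ℝᵈ, the minimum of ‖v‖₂ over all v ∈ ℝⁿ satisfying (Ac + v)ᵀ(AAᵀ − BBᵀ)(Ac + v) ≤ 0 equals ‖c‖₂/√2, and any minimizer v = A v_a + B v_b satisfies v_a = −c/2 and ‖v_b‖₂ = ‖c‖₂/2. -/
open Matrix

/-- Euclidean (ℓ²) norm of a vector. -/
noncomputable def norm2 {k : ℕ} (v : Fin k → ℝ) : ℝ :=
  Real.sqrt (∑ i, v i ^ 2)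

lemma sumsq_eq_dot {k : ℕ} (v : Fin k → ℝ) : ∑ i, v i ^ 2 = v ⬝ᵥ v := by
  simp [dotProduct, sq]

lemma norm2_eq_sqrt_dot {k : ℕ} (v : Fin k → ℝ) : norm2 v = Real.sqrt (v ⬝ᵥ v) := by
  rw [norm2, sumsq_eq_dot]

lemma dot_self_nonneg {k : ℕ} (v : Fin k → ℝ) : 0 ≤ v ⬝ᵥ v :=
  Finset.sum_nonneg fun _ _ => mul_self_nonneg _

/-- The minimum of `‖v‖₂` over all `v` with
`(Ac + v)ᵀ(AAᵀ − BBᵀ)(Ac + v) ≤ 0` equals `‖c‖₂/√2`, and any minimizer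
`v = A v_a + B v_b` satisfies `v_a = −c/2` and `‖v_b‖₂ = ‖c‖₂/2`. -/
theorem min_perturbation {n d : ℕ} (hd : d < n)
    (A : Matrix (Fin n) (Fin d) ℝ) (B : Matrix (Fin n) (Fin (n - d)) ℝ)
    (hA : Aᵀ * A = 1) (hB : Bᵀ * B = 1) (hAB : Aᵀ * B = 0)
    (c : Fin d → ℝ) :
    IsLeast {r : ℝ | ∃ v : Fin n → ℝ,
        (A.mulVec c + v) ⬝ᵥ (A * Aᵀ - B * Bᵀ).mulVec (A.mulVec c + v) ≤ 0 ∧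
        norm2 v = r}
      (norm2 c / Real.sqrt 2) ∧
    ∀ (va : Fin d → ℝ) (vb : Fin (n - d) → ℝ),
      (A.mulVec c + (A.mulVec va + B.mulVec vb)) ⬝ᵥ
          (A * Aᵀ - B * Bᵀ).mulVec (A.mulVec c + (A.mulVec va + B.mulVec vb)) ≤ 0 →
      norm2 (A.mulVec va + B.mulVec vb) = norm2 c / Real.sqrt 2 →
      va = -((1 / 2 : ℝ) • c) ∧ norm2 vb = norm2 c / 2 := by
  have hBA : Bᵀ * A = 0 := by
    have := congrArg Matrix.transpose hAB
    simpa using this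
  -- generic dot product reduction
  have key : ∀ {k l : ℕ} (M : Matrix (Fin n) (Fin k) ℝ) (N : Matrix (Fin n) (Fin l) ℝ)
      (x : Fin k → ℝ) (y : Fin l → ℝ),
      M.mulVec x ⬝ᵥ N.mulVec y = (Nᵀ * M).mulVec x ⬝ᵥ y := by
    intro k l M N x y
    rw [Matrix.dotProduct_mulVec, ← Matrix.mulVec_transpose, Matrix.mulVec_mulVec]
  have hAA : ∀ x y, A.mulVec x ⬝ᵥ A.mulVec y = x ⬝ᵥ y := by
    intro x y; rw [key, hA, Matrix.one_mulVec]
  have hBBd : ∀ x y, B.mulVec x ⬝ᵥ B.mulVec y = x ⬝ᵥ y := by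
    intro x y; rw [key, hB, Matrix.one_mulVec]
  have hABd : ∀ x y, A.mulVec x ⬝ᵥ B.mulVec y = 0 := by
    intro x y; rw [key, hBA, Matrix.zero_mulVec, zero_dotProduct]
  have hBAd : ∀ x y, B.mulVec x ⬝ᵥ A.mulVec y = 0 := by
    intro x y; rw [key, hAB, Matrix.zero_mulVec, zero_dotProduct]
  -- completeness
  have hcomp : A * Aᵀ + B * Bᵀ = 1 := by
    have e : Fin n ≃ Fin d ⊕ Fin (n - d) :=
      (finCongr (by omega : n = d + (n - d))).trans finSumFinEquiv.symm
    have h1 : Matrix.fromRows Aᵀ Bᵀ * Matrix.fromCols A B = 1 := by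
      rw [Matrix.fromRows_mul_fromCols, hA, hB, hAB, hBA, Matrix.fromBlocks_one]
    have h2 := (Matrix.fromCols_mul_fromRows_eq_one_comm e A B Aᵀ Bᵀ).mpr h1
    rwa [Matrix.fromCols_mul_fromRows] at h2
  -- action of the quadratic form matrix
  have hMA : ∀ x, (A * Aᵀ - B * Bᵀ).mulVec (A.mulVec x) = A.mulVec x := by
    intro x
    rw [Matrix.sub_mulVec, Matrix.mulVec_mulVec, Matrix.mulVec_mulVec,
      Matrix.mul_assoc, Matrix.mul_assoc, hA, hBA, Matrix.mul_one, Matrix.mul_zero, Matrix.zero_mulVec, sub_zero]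
  have hMB : ∀ y, (A * Aᵀ - B * Bᵀ).mulVec (B.mulVec y) = -(B.mulVec y) := by
    intro y
    rw [Matrix.sub_mulVec, Matrix.mulVec_mulVec, Matrix.mulVec_mulVec,
      Matrix.mul_assoc, Matrix.mul_assoc, hB, hAB, Matrix.mul_one, Matrix.mul_zero, Matrix.zero_mulVec, zero_sub]
  have Qform : ∀ (wa : Fin d → ℝ) (wb : Fin (n - d) → ℝ),
      (A.mulVec wa + B.mulVec wb) ⬝ᵥ
        (A * Aᵀ - B * Bᵀ).mulVec (A.mulVec wa + B.mulVec wb) = wa ⬝ᵥ wa - wb ⬝ᵥ wb := by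
    intro wa wb
    rw [Matrix.mulVec_add, hMA, hMB]
    simp only [dotProduct_add, add_dotProduct, dotProduct_neg, hAA, hBBd, hABd, hBAd]
    ring
  have hnorm : ∀ (wa : Fin d → ℝ) (wb : Fin (n - d) → ℝ),
      norm2 (A.mulVec wa + B.mulVec wb) = Real.sqrt (wa ⬝ᵥ wa + wb ⬝ᵥ wb) := by
    intro wa wb
    rw [norm2_eq_sqrt_dot]
    congr 1
    simp only [dotProduct_add, add_dotProduct, hAA, hBBd, hABd, hBAd]
    ring
  have hsplit : ∀ (wa : Fin d → ℝ) (wb : Fin (n - d) → ℝ),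
      A.mulVec c + (A.mulVec wa + B.mulVec wb) = A.mulVec (c + wa) + B.mulVec wb := by
    intro wa wb
    rw [Matrix.mulVec_add]
    abel
  set S : ℝ := c ⬝ᵥ c with hSdef
  have hS : 0 ≤ S := dot_self_nonneg c
  have hnc : norm2 c = Real.sqrt S := norm2_eq_sqrt_dot c
  have hid : ∀ wa : Fin d → ℝ, wa ⬝ᵥ wa + (c + wa) ⬝ᵥ (c + wa)
      = 2 * ((wa + (1 / 2 : ℝ) • c) ⬝ᵥ (wa + (1 / 2 : ℝ) • c)) + S / 2 := by
    intro wa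
    simp only [dotProduct_add, add_dotProduct, dotProduct_smul, smul_dotProduct,
      smul_eq_mul, dotProduct_comm c wa, hSdef]
    ring
  have htarget : norm2 c / Real.sqrt 2 = Real.sqrt (S / 2) := by
    rw [hnc, Real.sqrt_div hS]
  constructor
  · constructor
    · -- membership
      set vb0 : Fin (n - d) → ℝ := fun j => if j = ⟨0, by omega⟩ then norm2 c / 2 else 0
        with hvb0def
      have hvb0 : vb0 ⬝ᵥ vb0 = S / 4 := by
        have hsum : vb0 ⬝ᵥ vb0 = (norm2 c / 2) * (norm2 c / 2) := by
          simp only [dotProduct, hvb0def]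
          rw [Finset.sum_eq_single (⟨0, by omega⟩ : Fin (n - d))]
          · simp
          · intro b _ hb; simp [hb]
          · intro h; simp at h
        rw [hsum, hnc, div_mul_div_comm, Real.mul_self_sqrt hS]
        norm_num
      have hca : c + (-((1 / 2 : ℝ) • c)) = (1 / 2 : ℝ) • c := by
        funext i; simp; ring
      have hhalf : ((1 / 2 : ℝ) • c) ⬝ᵥ ((1 / 2 : ℝ) • c) = S / 4 := by
        simp only [dotProduct_smul, smul_dotProduct, smul_eq_mul, hSdef]
        ring
      have hva : (-((1 / 2 : ℝ) • c)) ⬝ᵥ (-((1 / 2 : ℝ) • c)) = S / 4 := by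
        simp only [neg_dotProduct, dotProduct_neg, neg_neg, hhalf]
      refine ⟨A.mulVec (-((1 / 2 : ℝ) • c)) + B.mulVec vb0, ?_, ?_⟩
      · rw [hsplit, Qform, hca, hhalf, hvb0]
        linarith
      · rw [hnorm, hva, hvb0, hnc, show S / 4 + S / 4 = S / 2 by ring, Real.sqrt_div hS]
    · rintro r ⟨v, hle, rfl⟩
      set wa := Aᵀ.mulVec v with hwa
      set wb := Bᵀ.mulVec v with hwb
      have hv : v = A.mulVec wa + B.mulVec wb := by
        have h := congrArg (fun M : Matrix (Fin n) (Fin n) ℝ => M.mulVec v) hcomp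
        simp only [Matrix.add_mulVec, Matrix.one_mulVec] at h
        rw [hwa, hwb, Matrix.mulVec_mulVec, Matrix.mulVec_mulVec]
        exact h.symm
      rw [hv] at hle ⊢
      rw [hsplit, Qform] at hle
      rw [hnorm, htarget]
      apply Real.sqrt_le_sqrt
      have h0 := dot_self_nonneg (wa + (1 / 2 : ℝ) • c)
      have := hid wa
      linarith
  · intro va vb h1 h2
    rw [hsplit, Qform] at h1
    rw [hnorm, htarget] at h2
    have hx : va ⬝ᵥ va + vb ⬝ᵥ vb = S / 2 := by
      have hnn : 0 ≤ va ⬝ᵥ va + vb ⬝ᵥ vb :=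
        add_nonneg (dot_self_nonneg va) (dot_self_nonneg vb)
      calc va ⬝ᵥ va + vb ⬝ᵥ vb = Real.sqrt (va ⬝ᵥ va + vb ⬝ᵥ vb) ^ 2 :=
            (Real.sq_sqrt hnn).symm
        _ = Real.sqrt (S / 2) ^ 2 := by rw [h2]
        _ = S / 2 := Real.sq_sqrt (by linarith)
    have ht0 : (va + (1 / 2 : ℝ) • c) ⬝ᵥ (va + (1 / 2 : ℝ) • c) = 0 := by
      have h0 := dot_self_nonneg (va + (1 / 2 : ℝ) • c)
      have := hid va
      linarith
    have hva : va = -((1 / 2 : ℝ) • c) := by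
      have hall := (Finset.sum_eq_zero_iff_of_nonneg
        (fun i _ => mul_self_nonneg ((va + (1 / 2 : ℝ) • c) i))).mp ht0
      funext i
      have := mul_self_eq_zero.mp (hall i (Finset.mem_univ i))
      simp only [Pi.add_apply, Pi.smul_apply, smul_eq_mul] at this
      simp only [Pi.neg_apply, Pi.smul_apply, smul_eq_mul]
      linarith
    refine ⟨hva, ?_⟩
    have hvaS : va ⬝ᵥ va = S / 4 := by
      rw [hva]
      simp only [neg_dotProduct, dotProduct_neg, neg_neg, dotProduct_smul,
        smul_dotProduct, smul_eq_mul, hSdef]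
      ring
    have hvbS : vb ⬝ᵥ vb = S / 4 := by linarith
    rw [norm2_eq_sqrt_dot, hvbS, hnc]
    rw [show S / 4 = S / 2 ^ 2 by ring, Real.sqrt_div hS, Real.sqrt_sq (by norm_num : (0:ℝ) ≤ 2)]
end

section
/- Let C be a real-valued random variable with continuous (atomless) cumulative distribution function G, and let C' be an independent copy of C. Define the transfer event: C' ∈ T(C) iff |C' − C/2| ≤ |C/2|. Then P(C' ∈ T(C)) = 1/2 − G(0) + G(0)², which lies in [1/4, 1/2], with value 1/2 attained exactly when G(0) ∈ {0, 1}. -/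
open MeasureTheory ProbabilityTheory Set

lemma diag_null (ν : Measure ℝ) [SFinite ν] [NullSingletonClass ν] :
    (ν.prod ν) {q : ℝ × ℝ | q.1 = q.2} = 0 := by
  have hm : MeasurableSet {q : ℝ × ℝ | q.1 = q.2} :=
    measurableSet_eq_fun measurable_fst measurable_snd
  rw [Measure.prod_apply hm]
  have h : ∀ x : ℝ, ν (Prod.mk x ⁻¹' {q : ℝ × ℝ | q.1 = q.2}) = 0 := by
    intro x
    have : Prod.mk x ⁻¹' {q : ℝ × ℝ | q.1 = q.2} = {x} := by
      ext y; simp [eq_comm]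
    rw [this]; exact measure_singleton x
  simp [h]

lemma half_square (ν : Measure ℝ) [IsProbabilityMeasure ν] [NullSingletonClass ν]
    (s s' : Set (ℝ × ℝ)) (hs' : MeasurableSet s')
    (hpre : Prod.swap ⁻¹' s' = s)
    (hsub : s ∩ s' ⊆ {q : ℝ × ℝ | q.1 = q.2})
    (u : Set ℝ) (huu : s ∪ s' = u ×ˢ u) :
    ((ν.prod ν) s).toReal + ((ν.prod ν) s').toReal = (ν u).toReal * (ν u).toReal ∧
    (ν.prod ν) s = (ν.prod ν) s' := by
  have hswap : (ν.prod ν) s' = (ν.prod ν) s := by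
    calc (ν.prod ν) s' = ((ν.prod ν).map Prod.swap) s' := by rw [Measure.prod_swap]
      _ = (ν.prod ν) (Prod.swap ⁻¹' s') := Measure.map_apply measurable_swap hs'
      _ = (ν.prod ν) s := by rw [hpre]
  have hinter : (ν.prod ν) (s ∩ s') = 0 :=
    measure_mono_null hsub (diag_null ν)
  have hkey : (ν.prod ν) (s ∪ s') + (ν.prod ν) (s ∩ s') = (ν.prod ν) s + (ν.prod ν) s' :=
    measure_union_add_inter s hs'
  have hU : (ν.prod ν) (s ∪ s') = ν u * ν u := by rw [huu, Measure.prod_prod]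
  rw [hinter, add_zero, hU] at hkey
  constructor
  · have := congrArg ENNReal.toReal hkey
    rw [ENNReal.toReal_add (measure_ne_top _ _) (measure_ne_top _ _), ENNReal.toReal_mul] at this
    linarith [this]
  · exact hswap.symm

/-- Lemma 1, toy model in dimension 1: for i.i.d. real `C`, `C'` with
continuous (atomless) CDF `G`, the probability of the transfer event
`|C' − C/2| ≤ |C/2|` equals `1/2 − G(0) + G(0)²`, which lies in `[1/4, 1/2]`,
with value `1/2` exactly when `G(0) ∈ {0, 1}`. -/
theorem et_one_dim {Ω : Type*} [MeasurableSpace Ω]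
    (μ : Measure Ω) [IsProbabilityMeasure μ]
    (C C' : Ω → ℝ) (hC : Measurable C) (hC' : Measurable C')
    (hindep : IndepFun C C' μ) (hid : IdentDistrib C C' μ μ)
    [NullSingletonClass (μ.map C)]
    (G : ℝ → ℝ) (hG : ∀ x, G x = (μ {ω | C ω ≤ x}).toReal) :
    (μ {ω | |C' ω - C ω / 2| ≤ |C ω / 2|}).toReal = 1 / 2 - G 0 + (G 0) ^ 2 ∧
    1 / 4 ≤ 1 / 2 - G 0 + (G 0) ^ 2 ∧
    1 / 2 - G 0 + (G 0) ^ 2 ≤ 1 / 2 ∧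
    (1 / 2 - G 0 + (G 0) ^ 2 = 1 / 2 ↔ G 0 = 0 ∨ G 0 = 1) := by
  set p := G 0 with hpdef
  set ν := μ.map C with hν
  haveI hprob : IsProbabilityMeasure ν := Measure.isProbabilityMeasure_map hC.aemeasurable
  haveI hNA : NullSingletonClass ν := by rw [hν]; infer_instance
  have hν' : μ.map C' = ν := hid.symm.map_eq
  -- identify p with ν (Iic 0)
  have hmap0 : μ {ω | C ω ≤ 0} = ν (Iic 0) := by
    rw [hν, Measure.map_apply hC measurableSet_Iic]; rfl
  have hp : p = (ν (Iic 0)).toReal := by rw [hpdef, hG 0, hmap0]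
  have hpge : 0 ≤ p := by rw [hp]; exact ENNReal.toReal_nonneg
  have hple : p ≤ 1 := by
    rw [hp]
    have h1 : ν (Iic 0) ≤ 1 := prob_le_one
    have := ENNReal.toReal_mono (by norm_num) h1
    simpa using this
  -- ν (Ici 0)
  have hIci : (ν (Ici 0)).toReal = 1 - p := by
    have h1 : ν (Iic 0) + ν (Ioi 0) = 1 := by
      rw [← measure_union (Iic_disjoint_Ioi le_rfl) measurableSet_Ioi, Iic_union_Ioi,
        measure_univ]
    have h2 : ν (Ioi 0) = ν (Ici 0) := measure_congr (Ioi_ae_eq_Ici (a := (0:ℝ)))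
    have h3 := congrArg ENNReal.toReal h1
    rw [ENNReal.toReal_add (measure_ne_top _ _) (measure_ne_top _ _), h2] at h3
    simp only [ENNReal.toReal_one] at h3
    rw [hp]; linarith
  -- the four sets
  set A : Set (ℝ × ℝ) := {q | 0 ≤ q.2 ∧ q.2 ≤ q.1} with hA
  set A' : Set (ℝ × ℝ) := {q | 0 ≤ q.1 ∧ q.1 ≤ q.2} with hA'
  set B : Set (ℝ × ℝ) := {q | q.1 ≤ q.2 ∧ q.2 ≤ 0} with hB
  set B' : Set (ℝ × ℝ) := {q | q.2 ≤ q.1 ∧ q.1 ≤ 0} with hB'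
  have hA'meas : MeasurableSet A' :=
    (measurableSet_le measurable_const measurable_fst).inter
      (measurableSet_le measurable_fst measurable_snd)
  have hB'meas : MeasurableSet B' :=
    (measurableSet_le measurable_snd measurable_fst).inter
      (measurableSet_le measurable_fst measurable_const)
  have hAmeas : MeasurableSet A :=
    (measurableSet_le measurable_const measurable_snd).inter
      (measurableSet_le measurable_snd measurable_fst)
  have hBmeas : MeasurableSet B :=
    (measurableSet_le measurable_fst measurable_snd).inter
      (measurableSet_le measurable_snd measurable_const)
  -- apply half_square
  have hresA := half_square ν A A' hA'meas rfl
    (fun q hq => le_antisymm hq.2.2 hq.1.2)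
    (Ici 0)
    (by
      ext ⟨x, y⟩
      simp only [hA, hA', mem_union, mem_setOf_eq, mem_prod, mem_Ici]
      constructor
      · rintro (⟨h1, h2⟩ | ⟨h1, h2⟩) <;> constructor <;> linarith
      · rintro ⟨h1, h2⟩
        rcases le_total y x with h | h
        exacts [Or.inl ⟨h2, h⟩, Or.inr ⟨h1, h⟩])
  have hresB := half_square ν B B' hB'meas rfl
    (fun q hq => le_antisymm hq.1.1 hq.2.1)
    (Iic 0)
    (by
      ext ⟨x, y⟩
      simp only [hB, hB', mem_union, mem_setOf_eq, mem_prod, mem_Iic]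
      constructor
      · rintro (⟨h1, h2⟩ | ⟨h1, h2⟩) <;> constructor <;> linarith
      · rintro ⟨h1, h2⟩
        rcases le_total x y with h | h
        exacts [Or.inl ⟨h, h2⟩, Or.inr ⟨h, h1⟩])
  -- event set
  set S : Set (ℝ × ℝ) := {q : ℝ × ℝ | |q.2 - q.1 / 2| ≤ |q.1 / 2|} with hS
  have hSmeas : MeasurableSet S :=
    measurableSet_le
      ((measurable_snd.sub (measurable_fst.div_const 2)).abs)
      ((measurable_fst.div_const 2).abs)
  have hSAB : S = A ∪ B := by
    ext ⟨x, y⟩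
    simp only [hS, hA, hB, mem_union, mem_setOf_eq]
    constructor
    · intro h
      rcases le_total 0 x with hx | hx
      · left
        rw [abs_of_nonneg (by linarith : (0:ℝ) ≤ x / 2), abs_le] at h
        exact ⟨by linarith [h.1], by linarith [h.2]⟩
      · right
        rw [abs_of_nonpos (by linarith : x / 2 ≤ 0), abs_le] at h
        exact ⟨by linarith [h.1], by linarith [h.2]⟩
    · rintro (⟨h1, h2⟩ | ⟨h1, h2⟩)
      · rw [abs_of_nonneg (by linarith : (0:ℝ) ≤ x / 2), abs_le]
        constructor <;> linarith
      · rw [abs_of_nonpos (by linarith : x / 2 ≤ 0), abs_le]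
        constructor <;> linarith
  -- joint law
  have hjoint : μ.map (fun ω => (C ω, C' ω)) = ν.prod ν := by
    have h := (indepFun_iff_map_prod_eq_prod_map_map hC.aemeasurable hC'.aemeasurable).mp hindep
    rw [hν', ← hν] at h
    exact h
  have hev : μ {ω | |C' ω - C ω / 2| ≤ |C ω / 2|} = (ν.prod ν) S := by
    have hpre : {ω | |C' ω - C ω / 2| ≤ |C ω / 2|} = (fun ω => (C ω, C' ω)) ⁻¹' S := rfl
    rw [hpre, ← Measure.map_apply (hC.prodMk hC') hSmeas, hjoint]
  -- measure of S
  have hAB : (ν.prod ν) (A ∩ B) = 0 :=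
    measure_mono_null (fun q hq => le_antisymm hq.2.1 hq.1.2) (diag_null ν)
  have hSsum : ((ν.prod ν) S).toReal =
      ((ν.prod ν) A).toReal + ((ν.prod ν) B).toReal := by
    have hkey : (ν.prod ν) (A ∪ B) + (ν.prod ν) (A ∩ B) = (ν.prod ν) A + (ν.prod ν) B :=
      measure_union_add_inter A hBmeas
    rw [hAB, add_zero] at hkey
    rw [hSAB, hkey, ENNReal.toReal_add (measure_ne_top _ _) (measure_ne_top _ _)]
  -- put it together
  have hAval : 2 * ((ν.prod ν) A).toReal = (1 - p) * (1 - p) := by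
    have h1 := hresA.1
    have h2 := hresA.2
    rw [← h2] at h1
    rw [hIci] at h1
    linarith
  have hBval : 2 * ((ν.prod ν) B).toReal = p * p := by
    have h1 := hresB.1
    have h2 := hresB.2
    rw [← h2] at h1
    rw [← hp] at h1
    linarith
  refine ⟨?_, by nlinarith [sq_nonneg (p - 1/2)], by nlinarith, ?_⟩
  · rw [hev, hSsum]
    nlinarith [hAval, hBval]
  · constructor
    · intro h
      have hz : p * (p - 1) = 0 := by nlinarith
      rcases mul_eq_zero.mp hz with h' | h'
      · exact Or.inl h'
      · exact Or.inr (by linarith)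
    · rintro (h | h) <;> rw [h] <;> norm_num
end

section
/- Let C and C' be i.i.d. random vectors in ℝᵈ with nonatomic law. Then P(‖C' − C/2‖₂ ≤ ‖C/2‖₂) ≤ 1/2. -/
open MeasureTheory ProbabilityTheory

lemma continuous_norm2 {k : ℕ} : Continuous (norm2 (k := k)) := by
  unfold norm2
  exact Real.continuous_sqrt.comp (by fun_prop)

lemma norm2_cancel {k : ℕ} {a b : Fin k → ℝ}
    (h1 : norm2 (b - (1 / 2 : ℝ) • a) ≤ norm2 ((1 / 2 : ℝ) • a))
    (h2 : norm2 (a - (1 / 2 : ℝ) • b) ≤ norm2 ((1 / 2 : ℝ) • b)) :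
    a = b := by
  have key : ∀ u v : Fin k → ℝ, norm2 u ≤ norm2 v → ∑ i, u i ^ 2 ≤ ∑ i, v i ^ 2 :=
    fun u v h => (Real.sqrt_le_sqrt_iff (by positivity)).mp h
  have s1 := key _ _ h1
  have s2 := key _ _ h2
  have hadd : ∑ i, ((b - (1/2 : ℝ) • a) i ^ 2 + (a - (1/2 : ℝ) • b) i ^ 2)
      ≤ ∑ i, (((1/2 : ℝ) • a) i ^ 2 + ((1/2 : ℝ) • b) i ^ 2) := by
    rw [Finset.sum_add_distrib, Finset.sum_add_distrib]
    exact add_le_add s1 s2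
  have hkey : ∑ i, (a i - b i) ^ 2 ≤ 0 := by
    have e : ∑ i, (a i - b i) ^ 2
        = ∑ i, (((b - (1/2 : ℝ) • a) i ^ 2 + (a - (1/2 : ℝ) • b) i ^ 2)
            - (((1/2 : ℝ) • a) i ^ 2 + ((1/2 : ℝ) • b) i ^ 2)) := by
      apply Finset.sum_congr rfl
      intro i _
      simp only [Pi.sub_apply, Pi.smul_apply, smul_eq_mul]
      ring
    rw [e, Finset.sum_sub_distrib]
    exact sub_nonpos.mpr hadd
  have hz := (Finset.sum_eq_zero_iff_of_nonneg
    (fun j _ => sq_nonneg (a j - b j))).mp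
    (le_antisymm hkey (Finset.sum_nonneg fun j _ => sq_nonneg _))
  funext i
  have := pow_eq_zero_iff (two_ne_zero) |>.mp (hz i (Finset.mem_univ i))
  exact (sub_eq_zero.mp this)

/-- For i.i.d. random vectors `C`, `C'` in ℝᵈ with nonatomic law,
`P(‖C' − C/2‖₂ ≤ ‖C/2‖₂) ≤ 1/2`. -/
theorem transfer_prob_le_half {Ω : Type*} [MeasurableSpace Ω] {d : ℕ}
    (μ : Measure Ω) [IsProbabilityMeasure μ]
    (C C' : Ω → (Fin d → ℝ)) (hC : Measurable C) (hC' : Measurable C')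
    (hindep : IndepFun C C' μ) (hid : IdentDistrib C C' μ μ)
    [NullSingletonClass (μ.map C)] :
    (μ {ω | norm2 (C' ω - (1 / 2 : ℝ) • C ω) ≤ norm2 ((1 / 2 : ℝ) • C ω)}).toReal
      ≤ 1 / 2 := by
  set ν := μ.map C with hν
  -- the set in product space
  set S : Set ((Fin d → ℝ) × (Fin d → ℝ)) :=
    {p | norm2 (p.2 - (1 / 2 : ℝ) • p.1) ≤ norm2 ((1 / 2 : ℝ) • p.1)} with hS
  have hSm : MeasurableSet S := by
    apply measurableSet_le
    · exact (continuous_norm2.comp (by fun_prop)).measurable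
    · exact (continuous_norm2.comp (by fun_prop)).measurable
  set A := {ω | norm2 (C' ω - (1 / 2 : ℝ) • C ω) ≤ norm2 ((1 / 2 : ℝ) • C ω)} with hA
  set B := {ω | norm2 (C ω - (1 / 2 : ℝ) • C' ω) ≤ norm2 ((1 / 2 : ℝ) • C' ω)} with hB
  have hpair : Measurable fun ω => (C ω, C' ω) := hC.prodMk hC'
  have hpair' : Measurable fun ω => (C' ω, C ω) := hC'.prodMk hC
  have hmap1 : μ.map (fun ω => (C ω, C' ω)) = ν.prod ν := by
    rw [(indepFun_iff_map_prod_eq_prod_map_map hC.aemeasurable hC'.aemeasurable).mp hindep,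
      ← hid.map_eq]
  have hmap2 : μ.map (fun ω => (C' ω, C ω)) = ν.prod ν := by
    rw [(indepFun_iff_map_prod_eq_prod_map_map hC'.aemeasurable hC.aemeasurable).mp hindep.symm,
      ← hid.map_eq]
  have hAeq : μ A = (ν.prod ν) S := by
    rw [← hmap1, Measure.map_apply hpair hSm]; rfl
  have hBeq : μ B = (ν.prod ν) S := by
    rw [← hmap2, Measure.map_apply hpair' hSm]; rfl
  have hAB : μ A = μ B := hAeq.trans hBeq.symm
  have hAm : MeasurableSet A := hpair hSm
  have hBm : MeasurableSet B := hpair' hSm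
  -- A ∩ B ⊆ {C = C'} which has measure 0
  have hdiag : μ {ω | C ω = C' ω} = 0 := by
    have hDm : MeasurableSet {p : (Fin d → ℝ) × (Fin d → ℝ) | p.1 = p.2} :=
      measurableSet_eq_fun measurable_fst measurable_snd
    have : μ {ω | C ω = C' ω} = (ν.prod ν) {p | p.1 = p.2} := by
      rw [← hmap1, Measure.map_apply hpair hDm]; rfl
    rw [this, Measure.prod_apply hDm]
    have : ∀ x, ν (Prod.mk x ⁻¹' {p : (Fin d → ℝ) × (Fin d → ℝ) | p.1 = p.2}) = 0 := by
      intro x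
      have : (Prod.mk x ⁻¹' {p : (Fin d → ℝ) × (Fin d → ℝ) | p.1 = p.2}) = {x} := by
        ext y; simp [eq_comm]
      rw [this]; exact measure_singleton x
    simp [this]
  have hABsub : A ∩ B ⊆ {ω | C ω = C' ω} := by
    rintro ω ⟨h1, h2⟩
    exact norm2_cancel h1 h2
  have hABzero : μ (A ∩ B) = 0 :=
    measure_mono_null hABsub hdiag
  have hsum : μ A + μ B = μ (A ∪ B) + μ (A ∩ B) := (measure_union_add_inter' hAm B).symm
  have h2 : μ A + μ A ≤ 1 := by
    rw [hAB] at *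
    calc μ B + μ B = μ (A ∪ B) + μ (A ∩ B) := by rw [← hAB] at hsum ⊢; exact hsum
    _ ≤ 1 + 0 := add_le_add prob_le_one hABzero.le
    _ = 1 := by simp
  have hfin : μ A ≠ ⊤ := (measure_lt_top μ A).ne
  have : (μ A).toReal + (μ A).toReal ≤ 1 := by
    have := ENNReal.toReal_mono (by simp) h2
    rwa [ENNReal.toReal_add hfin hfin, ENNReal.toReal_one] at this
  linarith
end

section
/- In the setting of ε-solution sets: suppose y ∈ T_ε(x) and x ∈ T_ε(y), i.e., there exist v ∈ V_ε(x) fooling y and v' ∈ V_ε(y) fooling x. If V_ε(x) ∩ V_ε(y) = ∅, then ‖v‖ > ‖u‖ for all u ∈ V_ε(y) and ‖v'‖ > ‖u'‖ for all u' ∈ V_ε(x); since v' ∈ V_ε(y) and v ∈ V_ε(x), this is a contradiction. Hence V_ε(x) ∩ V_ε(y) ≠ ∅. -/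
/-- hard direction of Step 1, Theorem 2: if `x` and `y` are mutually
transferable — some `v ∈ V_ε(x)` fools `y` and some `v' ∈ V_ε(y)` fools `x` — then
the ε-solution sets `V_ε(x)` and `V_ε(y)` have nonempty intersection. -/
theorem inter_nonempty_of_mutual_transfer {α V : Type*} [NormedAddCommGroup V]
    (Fools : α → V → Prop) (m : α → ℝ) (ε : ℝ) (hε : 0 < ε)
    (hm : ∀ x, IsLeast {r : ℝ | ∃ v, Fools x v ∧ ‖v‖ = r} (m x))
    (x y : α)
    (hxy : ∃ v : V, (‖v‖ - m x ≤ ε ∧ Fools x v) ∧ Fools y v)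
    (hyx : ∃ v' : V, (‖v'‖ - m y ≤ ε ∧ Fools y v') ∧ Fools x v') :
    ({v : V | ‖v‖ - m x ≤ ε ∧ Fools x v} ∩
     {v : V | ‖v‖ - m y ≤ ε ∧ Fools y v}).Nonempty := by
  obtain ⟨v, ⟨hvx, hvfx⟩, hvfy⟩ := hxy
  obtain ⟨w, ⟨hwy, hwfy⟩, hwfx⟩ := hyx
  by_cases h1 : ‖v‖ - m y ≤ ε
  · exact ⟨v, ⟨hvx, hvfx⟩, ⟨h1, hvfy⟩⟩
  by_cases h2 : ‖w‖ - m x ≤ ε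
  · exact ⟨w, ⟨h2, hwfx⟩, ⟨hwy, hwfy⟩⟩
  exfalso
  have hmx : m x ≤ ‖w‖ := (hm x).2 ⟨w, hwfx, rfl⟩
  have hmy : m y ≤ ‖v‖ := (hm y).2 ⟨v, hvfy, rfl⟩
  linarith
end
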